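/- Let G be an outerplanar graph, let K ⊆ V(G) induce a connected subgraph of G, and let H be a connected subgraph of G − K such that every vertex of H has a neighbor in K. Then H is a path. -/

import Mathlib

open SimpleGraph Walk in
open SimpleGraph

lemma aux_induce_singleton_connected {V : Type} (G : SimpleGraph V) (v : V) :
    (G.induce {v}).Connected := by
  haveI : Nonempty ({v} : Set V) := ⟨⟨v, rfl⟩⟩
  refine ⟨fun a b => ?_⟩
  have : a = b := Subtype.ext (by
    have ha := a.2; have hb := b.2
    simp only [Set.mem_singleton_iff] at ha hb
    rw [ha, hb])
  rw [this]

lemma aux_induce_walk_support_connected {V : Type} {G : SimpleGraph V} {u v : V}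
    (w : G.Walk u v) : (G.induce {x | x ∈ w.support}).Connected := by
  have h := w.toSubgraph_connected.induce_verts
  rwa [w.verts_toSubgraph] at h

lemma aux_getVert_injOn {V : Type} {G : SimpleGraph V} {u v : V} {p : G.Walk u v}
    (hp : p.IsPath) : ∀ i ≤ p.length, ∀ j ≤ p.length, p.getVert i = p.getVert j → i = j := by
  induction p with
  | nil => intro i hi j hj _; simp only [SimpleGraph.Walk.length_nil, Nat.le_zero] at hi hj; omega
  | cons h q ih =>
    rw [SimpleGraph.Walk.cons_isPath_iff] at hp
    intro i hi j hj heq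
    match i, j with
    | 0, 0 => rfl
    | 0, (j+1) =>
      exfalso
      apply hp.2
      rw [SimpleGraph.Walk.getVert_zero, SimpleGraph.Walk.getVert_cons_succ] at heq
      exact SimpleGraph.Walk.mem_support_iff_exists_getVert.mpr
        ⟨j, heq.symm, by simpa using hj⟩
    | (i+1), 0 =>
      exfalso
      apply hp.2
      rw [SimpleGraph.Walk.getVert_zero, SimpleGraph.Walk.getVert_cons_succ] at heq
      exact SimpleGraph.Walk.mem_support_iff_exists_getVert.mpr
        ⟨i, heq, by simpa using hi⟩
    | (i+1), (j+1) =>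
      simp only [SimpleGraph.Walk.getVert_cons_succ] at heq
      have := ih hp.1 i (by simpa using hi) j (by simpa using hj) heq
      omega
open SimpleGraph Walk

lemma aux_crossing {V : Type} {G : SimpleGraph V} {S : Set V} :
    ∀ {x a : V}, G.Walk x a → x ∉ S → a ∈ S → ∃ u v, u ∉ S ∧ v ∈ S ∧ G.Adj u v := by
  intro x a w
  induction w with
  | nil => intro hx ha; exact absurd ha hx
  | @cons x y a h q ih =>
    intro hx ha
    by_cases hy : y ∈ S
    · exact ⟨x, y, hx, hy, h⟩
    · exact ih hy ha

lemma aux_iso_pathGraph {V : Type} [Fintype V] (G : SimpleGraph V)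
    (hconn : G.Connected) (hac : G.IsAcyclic)
    (hdeg : ∀ v a b c : V, G.Adj v a → G.Adj v b → G.Adj v c → a = b ∨ a = c ∨ b = c) :
    ∃ n : ℕ, Nonempty (G ≃g SimpleGraph.pathGraph n) := by
  classical
  obtain ⟨v0⟩ := hconn.nonempty
  -- a maximal-length path
  set S : Set ℕ := {n | ∃ (a b : V) (p : G.Walk a b), p.IsPath ∧ p.length = n} with hS
  have h0 : (0 : ℕ) ∈ S := ⟨v0, v0, Walk.nil, Walk.IsPath.nil, rfl⟩
  have hbdd : ∀ m ∈ S, m < Fintype.card V := by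
    rintro m ⟨a, b, p, hp, rfl⟩; exact hp.length_lt
  have hmax : ∃ n ∈ S, ∀ m ∈ S, m ≤ n := by
    let T : Finset ℕ := (Finset.range (Fintype.card V)).filter (· ∈ S)
    have hT0 : 0 ∈ T := by
      simp only [T, Finset.mem_filter, Finset.mem_range]
      exact ⟨Fintype.card_pos_iff.mpr ⟨v0⟩, h0⟩
    refine ⟨T.max' ⟨0, hT0⟩, ?_, ?_⟩
    · have := T.max'_mem ⟨0, hT0⟩
      simp only [T, Finset.mem_filter] at this
      exact this.2
    · intro m hm
      exact T.le_max' m (Finset.mem_filter.mpr ⟨Finset.mem_range.mpr (hbdd m hm), hm⟩)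
  obtain ⟨n, ⟨a, b, p, hp, hlen⟩, hmaxle⟩ := hmax
  have hmaxle' : ∀ (x y : V) (q : G.Walk x y), q.IsPath → q.length ≤ p.length := by
    intro x y q hq; rw [hlen]; exact hmaxle _ ⟨x, y, q, hq, rfl⟩
  -- p spans all vertices
  have hspan : ∀ x : V, x ∈ p.support := by
    by_contra hx
    push_neg at hx
    obtain ⟨x, hx⟩ := hx
    obtain ⟨w⟩ := hconn.preconnected x a
    obtain ⟨u, y, hu, hy, huy⟩ := aux_crossing (S := {z | z ∈ p.support}) w hx p.start_mem_support
    obtain ⟨i, hiy, hile⟩ := Walk.mem_support_iff_exists_getVert.mp hy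
    rcases Nat.eq_zero_or_pos i with hi0 | hipos
    · -- y = a : extend at the start
      subst hi0
      rw [Walk.getVert_zero] at hiy; subst hiy
      have hpath : (Walk.cons huy p).IsPath := hp.cons hu
      have := hmaxle' _ _ _ hpath
      simp only [Walk.length_cons] at this; omega
    rcases Nat.lt_or_ge i p.length with hilt | hige
    · -- interior vertex: three neighbors
      have h1 : G.Adj y (p.getVert (i - 1)) := by
        have := p.adj_getVert_succ (i := i - 1) (by omega)
        rw [show i - 1 + 1 = i from by omega, hiy] at this
        exact this.symm
      have h2 : G.Adj y (p.getVert (i + 1)) := by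
        have := p.adj_getVert_succ (i := i) hilt
        rwa [hiy] at this
      have h3 : G.Adj y u := huy.symm
      have hne1 : p.getVert (i - 1) ≠ u := fun h => hu (h ▸
        Walk.mem_support_iff_exists_getVert.mpr ⟨i - 1, rfl, by omega⟩)
      have hne2 : p.getVert (i + 1) ≠ u := fun h => hu (h ▸
        Walk.mem_support_iff_exists_getVert.mpr ⟨i + 1, rfl, by omega⟩)
      have hne3 : p.getVert (i - 1) ≠ p.getVert (i + 1) := by
        intro h
        have := aux_getVert_injOn hp (i - 1) (by omega) (i + 1) (by omega) h
        omega
      rcases hdeg y _ _ _ h1 h2 h3 with h | h | h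
      · exact hne3 h
      · exact hne1 h
      · exact hne2 h
    · -- y = b : extend at the end
      have hib : i = p.length := by omega
      subst hib
      rw [Walk.getVert_length] at hiy; subst hiy
      have hups : u ∉ p.reverse.support := by
        rwa [Walk.support_reverse, List.mem_reverse]
      have hpath : (Walk.cons huy p.reverse).IsPath := hp.reverse.cons hups
      have := hmaxle' _ _ _ hpath
      simp only [Walk.length_cons, Walk.length_reverse] at this; omega
  -- every edge of G is an edge of p
  have hedge : ∀ u v : V, G.Adj u v → p.toSubgraph.Adj u v := by
    intro u v huv
    by_contra hne
    have hu : u ∈ p.toSubgraph.verts := (p.mem_verts_toSubgraph).mpr (hspan u)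
    have hv : v ∈ p.toSubgraph.verts := (p.mem_verts_toSubgraph).mpr (hspan v)
    obtain ⟨hne', hwalk⟩ :=
      (Subgraph.connected_iff_forall_exists_walk_subgraph _).mp p.toSubgraph_connected
    obtain ⟨w, hwle⟩ := hwalk hv hu
    have hedges : s(u, v) ∉ w.edges := by
      intro hmem
      exact hne (Subgraph.mem_edgeSet.mp
        (Subgraph.edgeSet_mono hwle ((w.mem_edges_toSubgraph).mpr hmem)))
    -- build a cycle
    have hq : ((w.toPath : G.Walk v u)).IsPath := (w.toPath).2
    have hqe : s(u, v) ∉ (w.toPath : G.Walk v u).edges := fun h =>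
      hedges (Walk.edges_toPath_subset w h)
    have hcyc : (Walk.cons huv (w.toPath : G.Walk v u)).IsCycle :=
      (Walk.cons_isCycle_iff _ huv).mpr ⟨hq, hqe⟩
    exact hac _ hcyc
  -- build the isomorphism
  have hinj : Function.Injective (fun i : Fin (p.length + 1) => p.getVert i) := by
    intro i j hij
    exact Fin.ext (aux_getVert_injOn hp i (Nat.lt_succ_iff.mp i.2) j (Nat.lt_succ_iff.mp j.2) hij)
  have hsurj : Function.Surjective (fun i : Fin (p.length + 1) => p.getVert i) := by
    intro x
    obtain ⟨i, hix, hile⟩ := Walk.mem_support_iff_exists_getVert.mp (hspan x)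
    exact ⟨⟨i, Nat.lt_succ_iff.mpr hile⟩, hix⟩
  let e : Fin (p.length + 1) ≃ V := Equiv.ofBijective _ ⟨hinj, hsurj⟩
  refine ⟨p.length + 1, ⟨?_⟩⟩
  refine RelIso.symm ⟨e, ?_⟩
  intro i j
  show G.Adj (p.getVert i) (p.getVert j) ↔ (pathGraph (p.length + 1)).Adj i j
  rw [pathGraph_adj]
  constructor
  · intro hadj
    have := hedge _ _ hadj
    rw [Walk.toSubgraph_adj_iff] at this
    obtain ⟨k, hk, hklt⟩ := this
    rw [Sym2.eq_iff] at hk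
    rcases hk with ⟨h1, h2⟩ | ⟨h1, h2⟩
    · left
      have e1 := aux_getVert_injOn hp k (by omega) i (Nat.lt_succ_iff.mp i.2) h1
      have e2 := aux_getVert_injOn hp (k+1) (by omega) j (Nat.lt_succ_iff.mp j.2) h2
      omega
    · right
      have e1 := aux_getVert_injOn hp k (by omega) j (Nat.lt_succ_iff.mp j.2) h1
      have e2 := aux_getVert_injOn hp (k+1) (by omega) i (Nat.lt_succ_iff.mp i.2) h2
      omega
  · rintro (h | h)
    · have := p.adj_getVert_succ (i := (i : ℕ)) (by omega)
      rwa [show (i : ℕ) + 1 = (j : ℕ) from h] at this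
    · have h2 := p.adj_getVert_succ (i := (j : ℕ)) (by omega)
      rw [show (j : ℕ) + 1 = (i : ℕ) from h] at h2
      exact h2.symm

/-- `G` contains `H` as a minor: pairwise disjoint nonempty connected bags in
`G`, one for each vertex of `H`, such that every edge of `H` is realized by an
edge of `G` between the corresponding bags. -/
def HasMinor {V W : Type} (G : SimpleGraph V) (H : SimpleGraph W) : Prop :=
  ∃ μ : W → Set V,
    (∀ x, (μ x).Nonempty) ∧
    (∀ x y, x ≠ y → Disjoint (μ x) (μ y)) ∧
    (∀ x, (G.induce (μ x)).Connected) ∧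
    (∀ ⦃x y⦄, H.Adj x y → ∃ u ∈ μ x, ∃ v ∈ μ y, G.Adj u v)

/-- A graph is outerplanar iff it has no `K₄` minor and no `K_{2,3}` minor. -/
def Outerplanar {V : Type} (G : SimpleGraph V) : Prop :=
  ¬ HasMinor G (completeGraph (Fin 4)) ∧
    ¬ HasMinor G (completeBipartiteGraph (Fin 2) (Fin 3))

open SimpleGraph Walk in
/-- Let `G` be outerplanar, let `K` induce a connected subgraph of `G`, and let
`H` be a connected subgraph of `G − K` each of whose vertices has a neighbor in
`K`.  Then `H` is a path. -/
theorem outerplanar_neighborhood_path {V : Type} [Fintype V] (G : SimpleGraph V)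
    (hG : Outerplanar G) (K : Set V) (hK : K.Nonempty)
    (hKconn : (G.induce K).Connected) (H : G.Subgraph)
    (hdisj : Disjoint H.verts K) (hHconn : H.Connected)
    (hnbr : ∀ v ∈ H.verts, ∃ u ∈ K, G.Adj v u) :
    ∃ n : ℕ, Nonempty (H.coe ≃g SimpleGraph.pathGraph n) := by
  classical
  haveI : Fintype ↥H.verts := Fintype.ofFinite _
  have hdeg : ∀ v a b c : ↥H.verts, H.coe.Adj v a → H.coe.Adj v b → H.coe.Adj v c →
      a = b ∨ a = c ∨ b = c := by
    have hG2 := hG.2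
    intro v a b c hva hvb hvc
    by_contra hcon
    push_neg at hcon
    obtain ⟨hab, hac, hbc⟩ := hcon
    apply hG2
    have d1 : ∀ z : ↥H.verts, Disjoint K ({(z : V)} : Set V) :=
      fun z => Set.disjoint_right.mpr (by rintro w rfl; exact fun hw => hdisj.le_bot ⟨z.2, hw⟩)
    have d2 : ∀ x y : ↥H.verts, x ≠ y → Disjoint ({(x : V)} : Set V) {(y : V)} :=
      fun x y hxy => by simp [Set.disjoint_singleton, Subtype.val_injective.ne hxy]
    have eK : ∀ z : ↥H.verts, ∃ u ∈ K, ∃ w ∈ ({(z : V)} : Set V), G.Adj u w := by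
      intro z
      obtain ⟨u, hu, hadj⟩ := hnbr z z.2
      exact ⟨u, hu, z, rfl, hadj.symm⟩
    have eK' : ∀ z : ↥H.verts, ∃ u ∈ ({(z : V)} : Set V), ∃ w ∈ K, G.Adj u w := by
      intro z
      obtain ⟨u, hu, hadj⟩ := hnbr z z.2
      exact ⟨z, rfl, u, hu, hadj⟩
    have ev : ∀ z : ↥H.verts, H.coe.Adj v z →
        ∃ u ∈ ({(v : V)} : Set V), ∃ w ∈ ({(z : V)} : Set V), G.Adj u w :=
      fun z hz => ⟨v, rfl, z, rfl, hz.adj_sub⟩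
    have ev' : ∀ z : ↥H.verts, H.coe.Adj v z →
        ∃ u ∈ ({(z : V)} : Set V), ∃ w ∈ ({(v : V)} : Set V), G.Adj u w :=
      fun z hz => ⟨z, rfl, v, rfl, hz.adj_sub.symm⟩
    refine ⟨Sum.elim (fun i => if i.val = 0 then K else {(v : V)})
      (fun j => if j.val = 0 then {(a : V)} else if j.val = 1 then {(b : V)} else {(c : V)}),
      ?_, ?_, ?_, ?_⟩
    · rintro (x | x) <;> fin_cases x <;>
        simp only [Sum.elim_inl, Sum.elim_inr, Fin.val_mk, Nat.reduceEqDiff, reduceIte] <;>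
        first
          | exact hK
          | exact Set.singleton_nonempty _
    · rintro (x | x) (y | y) hxy <;> fin_cases x <;> fin_cases y <;>
        simp only [Sum.elim_inl, Sum.elim_inr, Fin.val_mk, Nat.reduceEqDiff, reduceIte] <;>
        first
          | exact absurd rfl hxy
          | exact d1 _
          | exact (d1 _).symm
          | exact d2 _ _ hva.ne
          | exact d2 _ _ hvb.ne
          | exact d2 _ _ hvc.ne
          | exact d2 _ _ hva.ne.symm
          | exact d2 _ _ hvb.ne.symm
          | exact d2 _ _ hvc.ne.symm
          | exact d2 _ _ hab
          | exact d2 _ _ hac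
          | exact d2 _ _ hbc
          | exact d2 _ _ hab.symm
          | exact d2 _ _ hac.symm
          | exact d2 _ _ hbc.symm
    · rintro (x | x) <;> fin_cases x <;> simp only [Sum.elim_inl, Sum.elim_inr, Fin.val_mk, Nat.reduceEqDiff, reduceIte] <;>
        first
          | exact hKconn
          | exact aux_induce_singleton_connected G _
    · rintro (x | x) (y | y) hxy <;>
        simp only [completeBipartiteGraph_adj, Sum.isLeft_inl, Sum.isRight_inr,
          Sum.isRight_inl, Sum.isLeft_inr, true_and, and_true, false_and, and_false,
          or_false, false_or, and_self] at hxy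
      · exact absurd hxy (by simp)
      · fin_cases x <;> fin_cases y <;> simp only [Sum.elim_inl, Sum.elim_inr, Fin.val_mk, Nat.reduceEqDiff, reduceIte] <;>
          first
            | exact eK _
            | exact ev _ hva
            | exact ev _ hvb
            | exact ev _ hvc
      · fin_cases x <;> fin_cases y <;> simp only [Sum.elim_inl, Sum.elim_inr, Fin.val_mk, Nat.reduceEqDiff, reduceIte] <;>
          first
            | exact eK' _
            | exact ev' _ hva
            | exact ev' _ hvb
            | exact ev' _ hvc
      · exact absurd hxy (by simp)
  have hac : H.coe.IsAcyclic := by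
    have hG1 := hG.1
    intro v c hcyc
    cases c with
    | nil => exact hcyc.ne_nil rfl
    | @cons _ w _ h q =>
      have h3 := hcyc.three_le_length
      rw [Walk.length_cons] at h3
      rw [Walk.cons_isCycle_iff] at hcyc
      obtain ⟨hq, -⟩ := hcyc
      cases q with
      | nil => simp at h3
      | @cons _ x _ h₂ r =>
        rw [Walk.cons_isPath_iff] at hq
        obtain ⟨hr, hwr⟩ := hq
        rw [Walk.length_cons] at h3
        have hrlen : 1 ≤ r.length := by omega
        have hr' : (r.reverse).IsPath := hr.reverse
        have hr'nil : ¬ (r.reverse).Nil := by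
          rw [Walk.not_nil_iff_lt_length, Walk.length_reverse]; omega
        set y : ↥H.verts := (r.reverse).getVert 1 with hy
        have hvy : H.coe.Adj v y := (r.reverse).adj_snd hr'nil
        set t := (r.reverse).tail with ht
        have hsupp : v :: t.support = (r.reverse).support :=
          Walk.cons_support_tail hr'nil
        have hvnot : v ∉ t.support := by
          have := hr'.support_nodup
          rw [← hsupp] at this
          exact (List.nodup_cons.mp this).1
        have htsub : ∀ z, z ∈ t.support → z ∈ r.support := by
          intro z hz
          have : z ∈ (r.reverse).support := by rw [← hsupp]; exact List.mem_cons_of_mem _ hz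
          rwa [Walk.support_reverse, List.mem_reverse] at this
        have hwnot : w ∉ t.support := fun hmem => hwr (htsub _ hmem)
        have hxv : x ≠ v := by
          intro he
          have h0 : r.getVert 0 = r.getVert r.length := by
            rw [Walk.getVert_zero, Walk.getVert_length, he]
          have := aux_getVert_injOn hr 0 (Nat.zero_le _) r.length le_rfl h0
          omega
        have hxt : x ∈ t.support := by
          have hx' : x ∈ (r.reverse).support := by
            rw [Walk.support_reverse, List.mem_reverse]; exact r.start_mem_support
          rw [← hsupp] at hx'
          rcases List.mem_cons.mp hx' with h' | h'
          · exact absurd h' hxv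
          · exact h'
        -- map to G
        set t' : G.Walk (y : V) (x : V) := t.map H.hom with ht'
        set D : Set V := {z | z ∈ t'.support} with hD
        have hDmem : ∀ z : ↥H.verts, z ∈ t.support → (z : V) ∈ D := by
          intro z hz
          show (z : V) ∈ t'.support
          erw [Walk.support_map, List.mem_map]
          exact ⟨z, hz, rfl⟩
        have hDco : ∀ z ∈ D, z ∈ H.verts := by
          intro z hz
          erw [hD, Set.mem_setOf_eq, ht', Walk.support_map, List.mem_map] at hz
          obtain ⟨s, _, rfl⟩ := hz
          exact s.2
        have hDval : ∀ (s : ↥H.verts), (s : V) ∈ D → s ∈ t.support := by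
          intro s hs
          erw [hD, Set.mem_setOf_eq, ht', Walk.support_map, List.mem_map] at hs
          obtain ⟨s', hs', he⟩ := hs
          rwa [Subtype.val_injective he] at hs'
        have d1 : ∀ z : ↥H.verts, Disjoint K ({(z : V)} : Set V) :=
          fun z => Set.disjoint_right.mpr (by rintro u rfl; exact fun hu => hdisj.le_bot ⟨z.2, hu⟩)
        have dKD : Disjoint K D :=
          Set.disjoint_right.mpr (fun {z} hz hzK => hdisj.le_bot ⟨hDco z hz, hzK⟩)
        have dvw : Disjoint ({(v : V)} : Set V) {(w : V)} := by
          simp [Set.disjoint_singleton, Subtype.val_injective.ne h.ne]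
        have dvD : Disjoint ({(v : V)} : Set V) D := by
          rw [Set.disjoint_left]
          rintro u rfl hu
          exact hvnot (hDval v hu)
        have dwD : Disjoint ({(w : V)} : Set V) D := by
          rw [Set.disjoint_left]
          rintro u rfl hu
          exact hwnot (hDval w hu)
        -- edges
        obtain ⟨uv, huvK, huvadj⟩ := hnbr v v.2
        obtain ⟨uw, huwK, huwadj⟩ := hnbr w w.2
        obtain ⟨uy, huyK, huyadj⟩ := hnbr y y.2
        apply hG1
        refine ⟨fun i : Fin 4 => if i.val = 0 then K else if i.val = 1 then {(v : V)}
          else if i.val = 2 then {(w : V)} else D, ?_, ?_, ?_, ?_⟩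
        · intro i
          fin_cases i <;> simp only [Fin.val_mk, Nat.reduceEqDiff, reduceIte] <;>
            first
              | exact hK
              | exact Set.singleton_nonempty _
              | exact ⟨y, hDmem y t.start_mem_support⟩
        · intro i j hij
          fin_cases i <;> fin_cases j <;>
            simp only [Fin.val_mk, Nat.reduceEqDiff, reduceIte] <;>
            first
              | exact absurd rfl hij
              | exact d1 _
              | exact (d1 _).symm
              | exact dKD
              | exact dKD.symm
              | exact dvw
              | exact dvw.symm
              | exact dvD
              | exact dvD.symm
              | exact dwD
              | exact dwD.symm
        · intro i
          fin_cases i <;> simp only [Fin.val_mk, Nat.reduceEqDiff, reduceIte] <;>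
            first
              | exact hKconn
              | exact aux_induce_singleton_connected G _
              | exact aux_induce_walk_support_connected t'
        · intro i j hij
          have e01 : ∃ u ∈ K, ∃ z ∈ ({(v : V)} : Set V), G.Adj u z := ⟨uv, huvK, v, rfl, huvadj.symm⟩
          have e10 : ∃ u ∈ ({(v : V)} : Set V), ∃ z ∈ K, G.Adj u z := ⟨v, rfl, uv, huvK, huvadj⟩
          have e02 : ∃ u ∈ K, ∃ z ∈ ({(w : V)} : Set V), G.Adj u z := ⟨uw, huwK, w, rfl, huwadj.symm⟩
          have e20 : ∃ u ∈ ({(w : V)} : Set V), ∃ z ∈ K, G.Adj u z := ⟨w, rfl, uw, huwK, huwadj⟩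
          have e03 : ∃ u ∈ K, ∃ z ∈ D, G.Adj u z :=
            ⟨uy, huyK, y, hDmem y t.start_mem_support, huyadj.symm⟩
          have e30 : ∃ u ∈ D, ∃ z ∈ K, G.Adj u z :=
            ⟨y, hDmem y t.start_mem_support, uy, huyK, huyadj⟩
          have e12 : ∃ u ∈ ({(v : V)} : Set V), ∃ z ∈ ({(w : V)} : Set V), G.Adj u z :=
            ⟨v, rfl, w, rfl, h.adj_sub⟩
          have e21 : ∃ u ∈ ({(w : V)} : Set V), ∃ z ∈ ({(v : V)} : Set V), G.Adj u z :=
            ⟨w, rfl, v, rfl, h.adj_sub.symm⟩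
          have e13 : ∃ u ∈ ({(v : V)} : Set V), ∃ z ∈ D, G.Adj u z :=
            ⟨v, rfl, y, hDmem y t.start_mem_support, hvy.adj_sub⟩
          have e31 : ∃ u ∈ D, ∃ z ∈ ({(v : V)} : Set V), G.Adj u z :=
            ⟨y, hDmem y t.start_mem_support, v, rfl, hvy.adj_sub.symm⟩
          have e23 : ∃ u ∈ ({(w : V)} : Set V), ∃ z ∈ D, G.Adj u z :=
            ⟨w, rfl, x, hDmem x hxt, h₂.adj_sub⟩
          have e32 : ∃ u ∈ D, ∃ z ∈ ({(w : V)} : Set V), G.Adj u z :=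
            ⟨x, hDmem x hxt, w, rfl, h₂.adj_sub.symm⟩
          fin_cases i <;> fin_cases j <;>
            simp only [Fin.val_mk, Nat.reduceEqDiff, reduceIte] <;>
            first
              | exact absurd rfl hij
              | exact e01 | exact e10 | exact e02 | exact e20 | exact e03 | exact e30
              | exact e12 | exact e21 | exact e13 | exact e31 | exact e23 | exact e32
  exact aux_iso_pathGraph H.coe hHconn.coe hac hdeg
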